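/- Consider a sequence of legal rotor-router moves on a 4-regular graph G. For a directed edge (x,y), let N(x,y) be the number of times a particle was routed from x to y, and let θ(x,y) = N(x,y) − N(y,x) be the net crossing number. Let u(x) = δ^β · ∑_{y∼x} N(x,y) be the (rescaled) odometer, for a fixed scale factor δ^β > 0. If |N(x,y) − N(x,z)| ≤ 1 for all y, z ∼ x (the rotor mechanism property), then for every directed edge (x,y), the gradient ∇u(x,y) := δ^{-β/2}(u(y) − u(x)) satisfies ∇u(x,y) = δ^{β/2}(−4θ(x,y) + ρ(x,y)) for some function ρ on directed edges with |ρ(x,y)| ≤ 6 for all edges. -/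

import Mathlib

lemma rotor_sum_close {V : Type*} (nbr : V → Finset V)
    (hreg : ∀ x, (nbr x).card = 4)
    (N : V → V → ℕ)
    (hrotor : ∀ x, ∀ y ∈ nbr x, ∀ z ∈ nbr x, |(N x y : ℤ) - (N x z : ℤ)| ≤ 1)
    (x y : V) (hy : y ∈ nbr x) :
    |(∑ z ∈ nbr x, (N x z : ℤ)) - 4 * N x y| ≤ 3 := by
  classical
  have h1 : (∑ z ∈ nbr x, (N x z : ℤ)) - 4 * N x y
      = ∑ z ∈ nbr x, ((N x z : ℤ) - N x y) := by
    rw [Finset.sum_sub_distrib, Finset.sum_const, hreg x]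
    ring
  rw [h1, ← Finset.add_sum_erase _ _ hy]
  simp only [sub_self, zero_add]
  calc |∑ z ∈ (nbr x).erase y, ((N x z : ℤ) - N x y)|
      ≤ ∑ z ∈ (nbr x).erase y, |(N x z : ℤ) - N x y| := Finset.abs_sum_le_sum_abs _ _
    _ ≤ ∑ _z ∈ (nbr x).erase y, 1 := by
        refine Finset.sum_le_sum fun z hz => ?_
        exact hrotor x z (Finset.mem_of_mem_erase hz) y hy
    _ = 3 := by
        rw [Finset.sum_const, Finset.card_erase_of_mem hy, hreg x]
        rfl

/-- Rotor-router gradient identity: if `N` counts routings along directed edges of a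
4-regular graph and at each vertex the counts to the four neighbors differ by at most 1,
then with `u x = δ^β ∑_{y∼x} N x y` and `θ x y = N x y − N y x`, for every directed edge
∇u(x,y) = δ^{-β/2}(u y − u x) = δ^{β/2}(−4θ(x,y) + ρ(x,y)) with |ρ| ≤ 6. -/
theorem rotor_gradient_identity {V : Type*} (nbr : V → Finset V)
    (hreg : ∀ x, (nbr x).card = 4)
    (hsym : ∀ x y, y ∈ nbr x → x ∈ nbr y)
    (N : V → V → ℕ)
    (hrotor : ∀ x, ∀ y ∈ nbr x, ∀ z ∈ nbr x, |(N x y : ℤ) - (N x z : ℤ)| ≤ 1)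
    (δ β : ℝ) (hδ : 0 < δ) :
    ∃ ρ : V → V → ℝ, (∀ x, ∀ y ∈ nbr x, |ρ x y| ≤ 6) ∧
      ∀ x, ∀ y ∈ nbr x,
        δ ^ (-(β / 2)) *
            ((δ ^ β * ∑ z ∈ nbr y, (N y z : ℝ)) - (δ ^ β * ∑ z ∈ nbr x, (N x z : ℝ)))
          = δ ^ (β / 2) * (-4 * ((N x y : ℝ) - (N y x : ℝ)) + ρ x y) := by
  refine ⟨fun x y => ((∑ z ∈ nbr y, (N y z : ℤ)) - (∑ z ∈ nbr x, (N x z : ℤ))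
      + 4 * ((N x y : ℤ) - N y x) : ℤ), ?_, ?_⟩
  · intro x y hy
    have hx : x ∈ nbr y := hsym x y hy
    have h1 := rotor_sum_close nbr hreg N hrotor x y hy
    have h2 := rotor_sum_close nbr hreg N hrotor y x hx
    have key : |((∑ z ∈ nbr y, (N y z : ℤ)) - (∑ z ∈ nbr x, (N x z : ℤ))
        + 4 * ((N x y : ℤ) - N y x))| ≤ 6 := by
      have : ((∑ z ∈ nbr y, (N y z : ℤ)) - (∑ z ∈ nbr x, (N x z : ℤ))
          + 4 * ((N x y : ℤ) - N y x))
          = ((∑ z ∈ nbr y, (N y z : ℤ)) - 4 * N y x)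
            - ((∑ z ∈ nbr x, (N x z : ℤ)) - 4 * N x y) := by ring
      rw [this]
      calc _ ≤ |(∑ z ∈ nbr y, (N y z : ℤ)) - 4 * N y x|
            + |(∑ z ∈ nbr x, (N x z : ℤ)) - 4 * N x y| := abs_sub _ _
        _ ≤ 3 + 3 := add_le_add h2 h1
        _ = 6 := by norm_num
    simp only []
    exact_mod_cast key
  · intro x y hy
    have hpow : δ ^ (-(β / 2)) * δ ^ β = δ ^ (β / 2) := by
      rw [← Real.rpow_add hδ]
      ring_nf
    have : δ ^ (-(β / 2)) *
        ((δ ^ β * ∑ z ∈ nbr y, (N y z : ℝ)) - (δ ^ β * ∑ z ∈ nbr x, (N x z : ℝ)))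
        = δ ^ (β / 2) * ((∑ z ∈ nbr y, (N y z : ℝ)) - (∑ z ∈ nbr x, (N x z : ℝ))) := by
      rw [← hpow]; ring
    rw [this]
    push_cast
    ring
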